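/- Let 0 < β < 1, σ > 0, γ > 0, π ≥ 0, δ* > 0, ρ > 0, c₀ > 0, z₀ > 0. Let z : ℝ → ℝ be differentiable with z(t) > 0 and z'(t)/z(t) = (δ*+π)/β − γ·z(t)^{1−β} for all t ≥ 0. Define c(t) := c₀·z₀^{β/σ}·e^{−((ρ−δ*)/σ)t}·z(t)^{−β/σ} and λ(t) := c₀^{−σ}·z₀^{−β}·e^{(ρ−δ*)t}·z(t)^{β}. Then for all t ≥ 0: λ(t) = c(t)^{−σ} and λ'(t) = −λ(t)·βγ·z(t)^{1−β} + λ(t)(ρ+π). -/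

import Mathlib

/-- The consumption and costate components of the second and third closed-form
solutions of the transformed Lucas-Uzawa model: λ = c^{-σ} and λ satisfies the
costate equation λ' = -λβγz^{1-β} + λ(ρ+π). -/
theorem c_lam_components (β σ γ pi δs ρ c0 z0 : ℝ)
    (hβ0 : 0 < β) (hβ1 : β < 1) (hσ : 0 < σ) (hγ : 0 < γ) (hpi : 0 ≤ pi)
    (hδs : 0 < δs) (hρ : 0 < ρ) (hc0 : 0 < c0) (hz0 : 0 < z0)
    (z : ℝ → ℝ) (hzd : Differentiable ℝ z) (hzpos : ∀ t ≥ (0:ℝ), 0 < z t)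
    (hzode : ∀ t ≥ (0:ℝ), deriv z t / z t = (δs + pi) / β - γ * z t ^ (1 - β))
    (c lam : ℝ → ℝ)
    (hc : ∀ t, c t = c0 * z0 ^ (β / σ) * Real.exp (-((ρ - δs) / σ) * t)
      * z t ^ (-(β / σ)))
    (hlam : ∀ t, lam t = c0 ^ (-σ) * z0 ^ (-β) * Real.exp ((ρ - δs) * t)
      * z t ^ β) :
    (∀ t ≥ (0:ℝ), lam t = c t ^ (-σ)) ∧
    (∀ t ≥ (0:ℝ), deriv lam t
      = -(lam t) * (β * γ) * z t ^ (1 - β) + lam t * (ρ + pi)) := by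
  constructor
  · intro t ht
    have hz := hzpos t ht
    rw [hc, hlam]
    rw [Real.mul_rpow (by positivity) (by positivity),
        Real.mul_rpow (by positivity) (by positivity),
        Real.mul_rpow (by positivity) (by positivity),
        ← Real.rpow_mul hz0.le, ← Real.rpow_mul hz.le, ← Real.exp_mul]
    have e1 : β / σ * -σ = -β := by field_simp
    have e2 : -((ρ - δs) / σ) * t * -σ = (ρ - δs) * t := by field_simp
    have e3 : -(β / σ) * -σ = β := by field_simp
    rw [e1, e2, e3]
  · intro t ht
    have hz := hzpos t ht
    have hzode' : deriv z t = z t * ((δs + pi) / β - γ * z t ^ (1 - β)) := by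
      have h := hzode t ht
      rw [div_eq_iff hz.ne'] at h
      rw [h]; ring
    set C := c0 ^ (-σ) * z0 ^ (-β) with hC
    have hlamf : lam = fun s => C * (Real.exp ((ρ - δs) * s) * z s ^ β) := by
      funext s; rw [hlam]; ring
    have h1 : HasDerivAt (fun s => Real.exp ((ρ - δs) * s))
        (Real.exp ((ρ - δs) * t) * (ρ - δs)) t := by
      have := ((hasDerivAt_id t).const_mul (ρ - δs)).exp
      simpa using this
    have h2 : HasDerivAt (fun s => z s ^ β)
        (deriv z t * β * z t ^ (β - 1)) t :=
      ((hzd t).hasDerivAt).rpow_const (Or.inl hz.ne')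
    have hd : HasDerivAt lam
        (C * (Real.exp ((ρ - δs) * t) * (ρ - δs) * z t ^ β
          + Real.exp ((ρ - δs) * t) * (deriv z t * β * z t ^ (β - 1)))) t := by
      rw [hlamf]
      exact (h1.mul h2).const_mul C
    rw [hd.deriv, hlam, hzode']
    have hzz : z t * z t ^ (β - 1) = z t ^ β := by
      rw [← Real.rpow_one_add' hz.le (by intro h; exact hβ0.ne' (by linarith))]
      congr 1; ring
    have key : z t * ((δs + pi) / β - γ * z t ^ (1 - β)) * β * z t ^ (β - 1)
        = z t ^ β * ((δs + pi) - β * γ * z t ^ (1 - β)) := by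
      have hb : (δs + pi) / β * β = δs + pi := div_mul_cancel₀ _ hβ0.ne'
      calc z t * ((δs + pi) / β - γ * z t ^ (1 - β)) * β * z t ^ (β - 1)
          = z t * z t ^ (β - 1) * ((δs + pi) / β * β - β * γ * z t ^ (1 - β)) := by ring
        _ = z t ^ β * ((δs + pi) - β * γ * z t ^ (1 - β)) := by rw [hzz, hb]
    rw [key]
    ring
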